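/- Player Max can guarantee a nonnegative mean payoff from the initial state j̄ — that is, there exists a strategy for Max such that against every strategy of Min the resulting play has mean payoff ≥ 0 — if and only if there exists x : Fin n → WithBot ℝ with x j̄ ≥ 0 and A ⊙ x ≤ B ⊙ x componentwise. -/

import Mathlib

noncomputable section
open Finset

variable {m n : ℕ}

/-- The state reached at the end of a finite history: the initial state `j0` if the history
is empty, and otherwise the last Max-state recorded in it. -/
def lastState (j0 : Fin n) (h : List (Fin m × Fin n)) : Fin n :=
  (h.getLast?).elim j0 Prod.snd

/-- A finite history `[(i₁, j₁), …, (i_p, j_p)]` of the game started at `j0` is valid when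
each Min move `i_k` satisfies `A i_k j_{k-1} ≠ ⊥` and each Max move `j_k` satisfies
`B i_k j_k ≠ ⊥`. -/
def ValidHist (A B : Matrix (Fin m) (Fin n) (WithBot ℝ)) (j0 : Fin n)
    (h : List (Fin m × Fin n)) : Prop :=
  ∀ (k : ℕ) (hk : k < h.length),
    A (h.get ⟨k, hk⟩).1 (lastState j0 (h.take k)) ≠ ⊥ ∧
    B (h.get ⟨k, hk⟩).1 (h.get ⟨k, hk⟩).2 ≠ ⊥

/-- A strategy for player Max: given the initial state, the past history, and the state just
chosen by Min, choose the next Max state. -/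
def MaxStrategy (m n : ℕ) : Type :=
  Fin n → List (Fin m × Fin n) → Fin m → Fin n

/-- A strategy for player Min: given the initial state and the past history, choose the next
Min state. -/
def MinStrategy (m n : ℕ) : Type :=
  Fin n → List (Fin m × Fin n) → Fin m

/-- A Max strategy is valid when, after any valid history followed by a valid Min move `i`,
its answer `j` satisfies `B i j ≠ ⊥`. -/
def ValidMaxStrategy (A B : Matrix (Fin m) (Fin n) (WithBot ℝ)) (σ : MaxStrategy m n) :
    Prop :=
  ∀ (j0 : Fin n) (h : List (Fin m × Fin n)) (i : Fin m),
    ValidHist A B j0 h → A i (lastState j0 h) ≠ ⊥ → B i (σ j0 h i) ≠ ⊥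

/-- A Min strategy is valid when after any valid history its answer `i` satisfies
`A i j ≠ ⊥`, where `j` is the current state. -/
def ValidMinStrategy (A B : Matrix (Fin m) (Fin n) (WithBot ℝ)) (τ : MinStrategy m n) :
    Prop :=
  ∀ (j0 : Fin n) (h : List (Fin m × Fin n)),
    ValidHist A B j0 h → A (τ j0 h) (lastState j0 h) ≠ ⊥

/-- The history after `p` rounds of the play where Min plays `τ` and Max plays `σ`,
starting from `j0`. -/
def playHist (σ : MaxStrategy m n) (τ : MinStrategy m n) (j0 : Fin n) : ℕ → List (Fin m × Fin n)
  | 0 => []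
  | p + 1 =>
    let h := playHist σ τ j0 p
    let i := τ j0 h
    h ++ [(i, σ j0 h i)]

/-- `playI σ τ j0 p` is the Min state `i_{p+1}` chosen at round `p + 1` of the play. -/
def playI (σ : MaxStrategy m n) (τ : MinStrategy m n) (j0 : Fin n) (p : ℕ) : Fin m :=
  τ j0 (playHist σ τ j0 p)

/-- `playJ σ τ j0 p` is the Max state `j_p` of the play (with `j_0 = j0`). -/
def playJ (σ : MaxStrategy m n) (τ : MinStrategy m n) (j0 : Fin n) : ℕ → Fin n
  | 0 => j0
  | p + 1 => σ j0 (playHist σ τ j0 p) (playI σ τ j0 p)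

/-- The mean payoff for player Max of the play determined by the strategies `σ` and `τ`:
`liminf_{p→∞} (1/p) Σ_{k=1}^{p} (−A i_k j_{k−1} + B i_k j_k)`. -/
def meanPayoff (A B : Matrix (Fin m) (Fin n) (WithBot ℝ)) (σ : MaxStrategy m n)
    (τ : MinStrategy m n) (j0 : Fin n) : ℝ :=
  Filter.liminf
    (fun p : ℕ =>
      (1 / (p : ℝ)) *
        ∑ k ∈ Finset.range p,
          (-(A (playI σ τ j0 k) (playJ σ τ j0 k)).unbotD 0 +
            (B (playI σ τ j0 k) (playJ σ τ j0 (k + 1))).unbotD 0))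
    Filter.atTop


namespace MPG

open Filter

variable {m n : ℕ} (A B : Matrix (Fin m) (Fin n) (WithBot ℝ))

/-- real weight of one round -/
def wt (i : Fin m) (j j' : Fin n) : ℝ := (B i j').unbotD 0 - (A i j).unbotD 0

/-- partial sums of the play -/
def pSum (σ : MaxStrategy m n) (τ : MinStrategy m n) (j0 : Fin n) (p : ℕ) : ℝ :=
  ∑ k ∈ Finset.range p, wt A B (playI σ τ j0 k) (playJ σ τ j0 k) (playJ σ τ j0 (k+1))

lemma meanPayoff_eq (σ : MaxStrategy m n) (τ : MinStrategy m n) (j0 : Fin n) :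
    meanPayoff A B σ τ j0
      = Filter.liminf (fun p : ℕ => (1/(p:ℝ)) * pSum A B σ τ j0 p) Filter.atTop := by
  unfold meanPayoff pSum wt
  congr 1; funext p; congr 1
  exact Finset.sum_congr rfl (fun k _ => by ring)

lemma playHist_length (σ : MaxStrategy m n) (τ : MinStrategy m n) (j0 : Fin n) (p : ℕ) :
    (playHist σ τ j0 p).length = p := by
  induction p with
  | zero => rfl
  | succ p ih => simp [playHist, ih]

lemma lastState_concat (j0 : Fin n) (h : List (Fin m × Fin n)) (e : Fin m × Fin n) :
    lastState j0 (h ++ [e]) = e.2 := by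
  simp [lastState, List.getLast?_concat]

lemma lastState_playHist (σ : MaxStrategy m n) (τ : MinStrategy m n) (j0 : Fin n) (p : ℕ) :
    lastState j0 (playHist σ τ j0 p) = playJ σ τ j0 p := by
  cases p with
  | zero => rfl
  | succ p => rw [playHist, playJ]; exact lastState_concat _ _ _

lemma validHist_concat {j0 : Fin n} {h : List (Fin m × Fin n)} {i : Fin m} {j' : Fin n}
    (hv : ValidHist A B j0 h) (hi : A i (lastState j0 h) ≠ ⊥) (hj : B i j' ≠ ⊥) :
    ValidHist A B j0 (h ++ [(i, j')]) := by
  intro k hk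
  rcases lt_or_eq_of_le (Nat.le_of_lt_succ (by simpa using hk)) with hlt | heq
  · have h1 : (h ++ [(i, j')]).get ⟨k, hk⟩ = h.get ⟨k, hlt⟩ := by
      simp [List.get_eq_getElem, List.getElem_append_left hlt]
    have h2 : (h ++ [(i, j')]).take k = h.take k := by
      rw [List.take_append_of_le_length (le_of_lt hlt)]
    rw [h1, h2]; exact hv k hlt
  · subst heq
    have h1 : (h ++ [(i, j')]).get ⟨h.length, hk⟩ = (i, j') := by
      simp [List.get_eq_getElem]
    have h2 : (h ++ [(i, j')]).take h.length = h := by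
      simp
    rw [h1, h2]
    exact ⟨hi, hj⟩

lemma validHist_play {σ : MaxStrategy m n} {τ : MinStrategy m n}
    (hσ : ValidMaxStrategy A B σ) (hτ : ValidMinStrategy A B τ) (j0 : Fin n) (p : ℕ) :
    ValidHist A B j0 (playHist σ τ j0 p) := by
  induction p with
  | zero => intro k hk; simp [playHist] at hk
  | succ p ih =>
      rw [playHist]
      exact validHist_concat A B ih (hτ j0 _ ih) (hσ j0 _ _ ih (hτ j0 _ ih))

lemma playI_valid {σ : MaxStrategy m n} {τ : MinStrategy m n}
    (hσ : ValidMaxStrategy A B σ) (hτ : ValidMinStrategy A B τ) (j0 : Fin n) (p : ℕ) :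
    A (playI σ τ j0 p) (playJ σ τ j0 p) ≠ ⊥ := by
  have := hτ j0 (playHist σ τ j0 p) (validHist_play A B hσ hτ j0 p)
  rwa [lastState_playHist] at this

lemma playB_valid {σ : MaxStrategy m n} {τ : MinStrategy m n}
    (hσ : ValidMaxStrategy A B σ) (hτ : ValidMinStrategy A B τ) (j0 : Fin n) (p : ℕ) :
    B (playI σ τ j0 p) (playJ σ τ j0 (p+1)) ≠ ⊥ := by
  have h1 := playI_valid A B hσ hτ j0 p
  rw [← lastState_playHist σ τ j0 p] at h1
  exact hσ j0 (playHist σ τ j0 p) (playI σ τ j0 p) (validHist_play A B hσ hτ j0 p) h1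


lemma wb_add_ne_bot {a b : WithBot ℝ} (ha : a ≠ ⊥) (hb : b ≠ ⊥) : a + b ≠ ⊥ := by
  simp [WithBot.add_eq_bot, ha, hb]

lemma wb_exists_coe {a : WithBot ℝ} (ha : a ≠ ⊥) : ∃ r : ℝ, a = (r : WithBot ℝ) := by
  cases a with
  | bot => exact absurd rfl ha
  | coe r => exact ⟨r, rfl⟩

/-- key consequence of tropical feasibility -/
lemma feas_step (x : Fin n → WithBot ℝ)
    (hfeas : ∀ i, (Finset.univ.sup fun j => A i j + x j) ≤ Finset.univ.sup fun j => B i j + x j)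
    {i : Fin m} {j : Fin n} (hxj : x j ≠ ⊥) (hAij : A i j ≠ ⊥) :
    ∃ j', B i j' ≠ ⊥ ∧ x j' ≠ ⊥ ∧
      (A i j).unbotD 0 + (x j).unbotD 0 ≤ (B i j').unbotD 0 + (x j').unbotD 0 := by
  have h1 : A i j + x j ≤ Finset.univ.sup fun j' => B i j' + x j' :=
    le_trans (Finset.le_sup (f := fun j' => A i j' + x j') (Finset.mem_univ j)) (hfeas i)
  obtain ⟨j', -, hj'⟩ := Finset.exists_mem_eq_sup Finset.univ ⟨j, Finset.mem_univ j⟩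
    (fun j' => B i j' + x j')
  rw [hj'] at h1
  have hne : B i j' + x j' ≠ ⊥ := fun hb => by
    rw [hb, le_bot_iff] at h1
    exact wb_add_ne_bot hAij hxj h1
  have hB' : B i j' ≠ ⊥ := fun hb => hne (by simp [hb])
  have hx' : x j' ≠ ⊥ := fun hb => hne (by simp [hb])
  refine ⟨j', hB', hx', ?_⟩
  obtain ⟨a, ha⟩ := wb_exists_coe hAij
  obtain ⟨b, hb⟩ := wb_exists_coe hB'
  obtain ⟨u, hu⟩ := wb_exists_coe hxj
  obtain ⟨v, hv⟩ := wb_exists_coe hx'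
  rw [ha, hb, hu, hv] at h1 ⊢
  rw [← WithBot.coe_add, ← WithBot.coe_add, WithBot.coe_le_coe] at h1
  simpa using h1

/-- fallback choices -/
def maxFall (hB : ∀ i, ∃ j, B i j ≠ ⊥) (i : Fin m) : Fin n := (hB i).choose

lemma maxFall_spec (hB : ∀ i, ∃ j, B i j ≠ ⊥) (i : Fin m) : B i (maxFall B hB i) ≠ ⊥ :=
  (hB i).choose_spec

def minFall (hA : ∀ j, ∃ i, A i j ≠ ⊥) (j : Fin n) : Fin m := (hA j).choose

lemma minFall_spec (hA : ∀ j, ∃ i, A i j ≠ ⊥) (j : Fin n) : A (minFall A hA j) j ≠ ⊥ :=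
  (hA j).choose_spec

/-- canonical valid Min strategy -/
def tau0 (hA : ∀ j, ∃ i, A i j ≠ ⊥) : MinStrategy m n :=
  fun j0 h => minFall A hA (lastState j0 h)

lemma tau0_valid (hA : ∀ j, ∃ i, A i j ≠ ⊥) : ValidMinStrategy A B (tau0 A hA) :=
  fun j0 h _ => minFall_spec A hA (lastState j0 h)

/-- Max strategy following a feasible vector -/
def sigmaX (hB : ∀ i, ∃ j, B i j ≠ ⊥) (x : Fin n → WithBot ℝ)
    (hfeas : ∀ i, (Finset.univ.sup fun j => A i j + x j) ≤ Finset.univ.sup fun j => B i j + x j) :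
    MaxStrategy m n :=
  fun j0 h i =>
    if hc : x (lastState j0 h) ≠ ⊥ ∧ A i (lastState j0 h) ≠ ⊥ then
      (feas_step A B x hfeas hc.1 hc.2).choose
    else maxFall B hB i

lemma sigmaX_valid (hB : ∀ i, ∃ j, B i j ≠ ⊥) (x : Fin n → WithBot ℝ)
    (hfeas : ∀ i, (Finset.univ.sup fun j => A i j + x j) ≤ Finset.univ.sup fun j => B i j + x j) :
    ValidMaxStrategy A B (sigmaX A B hB x hfeas) := by
  intro j0 h i _ _
  unfold sigmaX
  split
  · next hc => exact (feas_step A B x hfeas hc.1 hc.2).choose_spec.1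
  · exact maxFall_spec B hB i

lemma sigmaX_eval (hB : ∀ i, ∃ j, B i j ≠ ⊥) (x : Fin n → WithBot ℝ)
    (hfeas : ∀ i, (Finset.univ.sup fun j => A i j + x j) ≤ Finset.univ.sup fun j => B i j + x j)
    (j0 : Fin n) (h : List (Fin m × Fin n)) (i : Fin m)
    (hx : x (lastState j0 h) ≠ ⊥) (hAi : A i (lastState j0 h) ≠ ⊥) :
    ∃ j', sigmaX A B hB x hfeas j0 h i = j' ∧ B i j' ≠ ⊥ ∧ x j' ≠ ⊥ ∧
      (A i (lastState j0 h)).unbotD 0 + (x (lastState j0 h)).unbotD 0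
        ≤ (B i j').unbotD 0 + (x j').unbotD 0 := by
  refine ⟨(feas_step A B x hfeas hx hAi).choose, ?_, (feas_step A B x hfeas hx hAi).choose_spec.1,
    (feas_step A B x hfeas hx hAi).choose_spec.2.1, (feas_step A B x hfeas hx hAi).choose_spec.2.2⟩
  unfold sigmaX
  rw [dif_pos ⟨hx, hAi⟩]

lemma sigmaX_invariant (hB : ∀ i, ∃ j, B i j ≠ ⊥) (x : Fin n → WithBot ℝ)
    (hfeas : ∀ i, (Finset.univ.sup fun j => A i j + x j) ≤ Finset.univ.sup fun j => B i j + x j)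
    (jbar : Fin n) (hx0 : x jbar ≠ ⊥)
    {τ : MinStrategy m n} (hτ : ValidMinStrategy A B τ) (p : ℕ) :
    x (playJ (sigmaX A B hB x hfeas) τ jbar p) ≠ ⊥ ∧
      (x jbar).unbotD 0 ≤ pSum A B (sigmaX A B hB x hfeas) τ jbar p +
        (x (playJ (sigmaX A B hB x hfeas) τ jbar p)).unbotD 0 := by
  set σ := sigmaX A B hB x hfeas with hσdef
  have hσ : ValidMaxStrategy A B σ := sigmaX_valid A B hB x hfeas
  induction p with
  | zero => exact ⟨hx0, by simp [pSum, playJ]⟩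
  | succ p ih =>
      obtain ⟨ihx, ihs⟩ := ih
      have hiv : A (playI σ τ jbar p) (playJ σ τ jbar p) ≠ ⊥ := playI_valid A B hσ hτ jbar p
      have hls : lastState jbar (playHist σ τ jbar p) = playJ σ τ jbar p :=
        lastState_playHist σ τ jbar p
      obtain ⟨j', hj'eq, hBj', hxj', hineq⟩ := sigmaX_eval A B hB x hfeas jbar
        (playHist σ τ jbar p) (playI σ τ jbar p) (by rw [hls]; exact ihx) (by rw [hls]; exact hiv)
      have hstep : playJ σ τ jbar (p+1) = j' := hj'eq
      rw [hls] at hineq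
      have hsum : pSum A B σ τ jbar (p+1) = pSum A B σ τ jbar p
          + wt A B (playI σ τ jbar p) (playJ σ τ jbar p) (playJ σ τ jbar (p+1)) :=
        Finset.sum_range_succ _ _
      rw [hstep]
      constructor
      · exact hxj'
      · rw [hsum, hstep]
        unfold wt
        linarith

lemma feasible_bounded (hB : ∀ i, ∃ j, B i j ≠ ⊥) (x : Fin n → WithBot ℝ)
    (hfeas : ∀ i, (Finset.univ.sup fun j => A i j + x j) ≤ Finset.univ.sup fun j => B i j + x j)
    (jbar : Fin n) (hx0 : x jbar ≠ ⊥)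
    {τ : MinStrategy m n} (hτ : ValidMinStrategy A B τ) (p : ℕ) :
    (x jbar).unbotD 0 - (∑ j, |(x j).unbotD 0|) ≤ pSum A B (sigmaX A B hB x hfeas) τ jbar p := by
  obtain ⟨hxp, hs⟩ := sigmaX_invariant A B hB x hfeas jbar hx0 hτ p
  have hb : (x (playJ (sigmaX A B hB x hfeas) τ jbar p)).unbotD 0 ≤ ∑ j, |(x j).unbotD 0| :=
    le_trans (le_abs_self _)
      (Finset.single_le_sum (f := fun j => |(x j).unbotD 0|) (fun _ _ => abs_nonneg _)
        (Finset.mem_univ (playJ (sigmaX A B hB x hfeas) τ jbar p)))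
  linarith
/-! ### Stacks and the first-cycle game -/

/-- bound on single-round weights -/
def Cw : ℝ := (∑ i, ∑ j, |(A i j).unbotD 0|) + (∑ i, ∑ j, |(B i j).unbotD 0|) + 1

lemma Cw_pos : 0 < Cw A B := by
  unfold Cw
  have h1 : (0:ℝ) ≤ ∑ i, ∑ j, |(A i j).unbotD 0| :=
    Finset.sum_nonneg fun _ _ => Finset.sum_nonneg fun _ _ => abs_nonneg _
  have h2 : (0:ℝ) ≤ ∑ i, ∑ j, |(B i j).unbotD 0| :=
    Finset.sum_nonneg fun _ _ => Finset.sum_nonneg fun _ _ => abs_nonneg _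
  linarith

lemma abs_entry_le_sum (M : Matrix (Fin m) (Fin n) (WithBot ℝ)) (i : Fin m) (j : Fin n) :
    |(M i j).unbotD 0| ≤ ∑ i', ∑ j', |(M i' j').unbotD 0| := by
  calc |(M i j).unbotD 0| ≤ ∑ j', |(M i j').unbotD 0| :=
        Finset.single_le_sum (f := fun j' => |(M i j').unbotD 0|)
          (fun _ _ => abs_nonneg _) (Finset.mem_univ j)
    _ ≤ ∑ i', ∑ j', |(M i' j').unbotD 0| :=
        Finset.single_le_sum (f := fun i' => ∑ j', |(M i' j').unbotD 0|)
          (fun _ _ => Finset.sum_nonneg fun _ _ => abs_nonneg _) (Finset.mem_univ i)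

lemma abs_wt_le (i : Fin m) (j j' : Fin n) : |wt A B i j j'| ≤ Cw A B := by
  unfold wt Cw
  have h1 := abs_entry_le_sum A i j
  have h2 := abs_entry_le_sum B i j'
  have h3 : |(B i j').unbotD 0 - (A i j).unbotD 0| ≤ |(B i j').unbotD 0| + |(A i j).unbotD 0| :=
    abs_sub _ _
  linarith

variable (d : Fin n)

/-- top of stack -/
def stTop (st : List (Fin n × ℝ)) : Fin n × ℝ := st.headD (d, 0)

/-- pop the stack down to the topmost occurrence of `j'` (empty if none) -/
def popTo (j' : Fin n) (st : List (Fin n × ℝ)) : List (Fin n × ℝ) :=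
  st.dropWhile (fun e => decide (e.1 ≠ j'))

lemma popTo_suffix (j' : Fin n) (st : List (Fin n × ℝ)) : popTo j' st <:+ st :=
  List.dropWhile_suffix _

lemma popTo_eq_nil_iff {j' : Fin n} {st : List (Fin n × ℝ)} :
    popTo j' st = [] ↔ ∀ e ∈ st, e.1 ≠ j' := by
  unfold popTo
  rw [List.dropWhile_eq_nil_iff]
  simp

lemma popTo_head {j' : Fin n} {st : List (Fin n × ℝ)} {e : Fin n × ℝ} {q : List (Fin n × ℝ)}
    (h : popTo j' st = e :: q) : e.1 = j' := by
  have := List.head?_dropWhile_not (fun e : Fin n × ℝ => decide (e.1 ≠ j')) st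
  unfold popTo at h
  rw [h] at this
  simpa using this

/-- one step of the stack reduction -/
def stepSt (st : List (Fin n × ℝ)) (e : Fin m × Fin n) : List (Fin n × ℝ) :=
  match popTo e.2 st with
  | [] => (e.2, (stTop d st).2 + wt A B e.1 (stTop d st).1 e.2) :: st
  | q :: l => q :: l

/-- the reduced stack of a history -/
def reduceSt (j0 : Fin n) (h : List (Fin m × Fin n)) : List (Fin n × ℝ) :=
  h.foldl (stepSt A B d) [(j0, 0)]

lemma reduceSt_concat (j0 : Fin n) (h : List (Fin m × Fin n)) (e : Fin m × Fin n) :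
    reduceSt A B d j0 (h ++ [e]) = stepSt A B d (reduceSt A B d j0 h) e := by
  unfold reduceSt
  rw [List.foldl_append]
  rfl

lemma reduceSt_ne_nil_top (j0 : Fin n) (h : List (Fin m × Fin n)) :
    reduceSt A B d j0 h ≠ [] ∧ (stTop d (reduceSt A B d j0 h)).1 = lastState j0 h := by
  induction h using List.reverseRecOn with
  | nil => exact ⟨by simp [reduceSt], rfl⟩
  | append_singleton h e ih =>
      rw [reduceSt_concat]
      have hlast : lastState j0 (h ++ [e]) = e.2 := lastState_concat j0 h e
      unfold stepSt
      rcases hp : popTo e.2 (reduceSt A B d j0 h) with - | ⟨q, l⟩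
      · exact ⟨by simp, by simp [stTop, hlast]⟩
      · refine ⟨by simp, ?_⟩
        rw [hlast, stTop]
        simpa using popTo_head hp

/-- the edge relation of stacks: `a` was pushed on top of `b` -/
def edgeR (a b : Fin n × ℝ) : Prop :=
  ∃ i, A i b.1 ≠ ⊥ ∧ B i a.1 ≠ ⊥ ∧ a.2 = b.2 + wt A B i b.1 a.1

/-- structural invariant of reachable stacks -/
def GoodStack (jbar : Fin n) (st : List (Fin n × ℝ)) : Prop :=
  st ≠ [] ∧ st.getLast? = some (jbar, 0) ∧ List.Chain' (edgeR A B) st ∧ (st.map Prod.fst).Nodup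

lemma GoodStack.suffix {jbar : Fin n} {st s : List (Fin n × ℝ)} (hg : GoodStack A B jbar st)
    (hs : s <:+ st) (hne : s ≠ []) : GoodStack A B jbar s := by
  obtain ⟨-, hlast, hchain, hnd⟩ := hg
  refine ⟨hne, ?_, hchain.suffix hs, hnd.sublist ((hs.map Prod.fst).sublist)⟩
  obtain ⟨t, ht⟩ := hs
  rw [← ht, List.getLast?_append] at hlast
  rcases hq : s.getLast? with - | v
  · exact absurd hq (by simp [hne])
  · rw [hq] at hlast; simp at hlast; simp [hlast]

lemma GoodStack.length_le {jbar : Fin n} {st : List (Fin n × ℝ)} (hg : GoodStack A B jbar st) :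
    st.length ≤ n := by
  have := hg.2.2.2.length_le_card
  simpa using this

lemma GoodStack.top_abs_le {jbar : Fin n} :
    ∀ {st : List (Fin n × ℝ)}, GoodStack A B jbar st → |(stTop d st).2| ≤ Cw A B * n := by
  have key : ∀ (st : List (Fin n × ℝ)), st ≠ [] → List.Chain' (edgeR A B) st →
      st.getLast? = some (jbar, 0) → |(stTop d st).2| ≤ Cw A B * (st.length - 1) := by
    intro st
    induction st with
    | nil => intro h; exact absurd rfl h
    | cons a rest ih =>
        intro _ hchain hlast
        rcases rest with - | ⟨b, t⟩
        · simp only [List.getLast?_singleton, Option.some.injEq] at hlast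
          subst hlast
          simp [stTop]
        · have hchain' : List.Chain' (edgeR A B) (b :: t) := hchain.tail
          have hedge : edgeR A B a b := (List.isChain_cons_cons.mp hchain).1
          have hlast' : (b :: t).getLast? = some (jbar, 0) := by
            rw [← hlast]; symm
            exact List.getLast?_cons_cons ..
          have hb := ih (by simp) hchain' hlast'
          obtain ⟨i, -, -, hsum⟩ := hedge
          have hw := abs_wt_le A B i b.1 a.1
          have : |a.2| ≤ |b.2| + Cw A B := by
            rw [hsum]
            calc |b.2 + wt A B i b.1 a.1| ≤ |b.2| + |wt A B i b.1 a.1| := abs_add_le _ _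
              _ ≤ _ := by linarith
          simp only [stTop, List.headD_cons] at hb ⊢
          have hlen : ((b :: t).length : ℝ) - 1 + 1 = ((a :: b :: t).length : ℝ) - 1 := by
            push_cast [List.length_cons]
            ring
          calc |a.2| ≤ |b.2| + Cw A B := this
            _ ≤ Cw A B * ((b::t).length - 1) + Cw A B := by linarith
            _ = Cw A B * ((a :: b :: t).length - 1) := by rw [← hlen]; ring
  intro st hg
  calc |(stTop d st).2| ≤ Cw A B * (st.length - 1) := key st hg.1 hg.2.2.1 hg.2.1
    _ ≤ Cw A B * n := by
        have h1 : (st.length : ℝ) - 1 ≤ (n : ℝ) := by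
          have := hg.length_le A B
          have : (st.length : ℝ) ≤ (n : ℝ) := by exact_mod_cast this
          linarith
        have := le_of_lt (Cw_pos A B)
        nlinarith
/-! ### The first-cycle game -/

/-- `MWfuel f st` : Max wins the first-cycle game from stack `st` within `f` moves. -/
def MWfuel : ℕ → List (Fin n × ℝ) → Prop
  | 0, _ => False
  | f+1, st => ∀ i : Fin m, A i (stTop d st).1 ≠ ⊥ →
      ∃ j' : Fin n, B i j' ≠ ⊥ ∧
        ((∀ e ∈ st, e.1 ≠ j') →
          MWfuel f ((j', (stTop d st).2 + wt A B i (stTop d st).1 j') :: st)) ∧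
        (∀ e q, popTo j' st = e :: q → 0 ≤ (stTop d st).2 + wt A B i (stTop d st).1 j' - e.2)

lemma MWfuel_elim {f : ℕ} {st : List (Fin n × ℝ)} {i : Fin m}
    (hf : MWfuel A B d f st) (hi : A i (stTop d st).1 ≠ ⊥) :
    ∃ j' : Fin n, B i j' ≠ ⊥ ∧
      ((∀ e ∈ st, e.1 ≠ j') →
        MWfuel A B d (f-1) ((j', (stTop d st).2 + wt A B i (stTop d st).1 j') :: st)) ∧
      (∀ e q, popTo j' st = e :: q → 0 ≤ (stTop d st).2 + wt A B i (stTop d st).1 j' - e.2) := by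
  cases f with
  | zero => exact absurd hf (by simp [MWfuel])
  | succ f => exact hf i hi

lemma not_MWfuel_elim {f : ℕ} {st : List (Fin n × ℝ)}
    (hst : ¬ MWfuel A B d (f+1) st) :
    ∃ i, A i (stTop d st).1 ≠ ⊥ ∧ ∀ j', B i j' ≠ ⊥ →
      ((popTo j' st = [] →
          ¬ MWfuel A B d f ((j', (stTop d st).2 + wt A B i (stTop d st).1 j') :: st)) ∧
       (∀ e q, popTo j' st = e :: q → (stTop d st).2 + wt A B i (stTop d st).1 j' - e.2 < 0)) := by
  unfold MWfuel at hst
  push_neg at hst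
  obtain ⟨i, hi, hj⟩ := hst
  refine ⟨i, hi, fun j' hB' => ?_⟩
  have h2 := hj j' hB'
  constructor
  · intro hnil hmw
    obtain ⟨e, q, he, -⟩ := h2 (fun _ => hmw)
    rw [hnil] at he
    exact absurd he (by simp)
  · intro e q he
    have hP : (∀ e' ∈ st, e'.1 ≠ j') →
        MWfuel A B d f ((j', (stTop d st).2 + wt A B i (stTop d st).1 j') :: st) := by
      intro hfresh
      exfalso
      have hmem : e ∈ st := (popTo_suffix j' st).subset (by rw [he]; simp)
      exact hfresh e hmem (popTo_head he)
    obtain ⟨e', q', he', hcyc⟩ := h2 hP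
    rw [he] at he'
    rw [(List.cons_eq_cons.mp he').1]
    exact hcyc

lemma succFuel {ℓ : ℕ} (h : ℓ ≤ n+1) : n + 2 - ℓ = (n + 1 - ℓ) + 1 := by omega

open Classical in
/-- Max's erasure strategy -/
def sigmaEr (hB : ∀ i, ∃ j, B i j ≠ ⊥) : MaxStrategy m n := fun j0 h i =>
  if hc : MWfuel A B d (n + 2 - (reduceSt A B d j0 h).length) (reduceSt A B d j0 h) ∧
      A i (stTop d (reduceSt A B d j0 h)).1 ≠ ⊥
  then (MWfuel_elim A B d hc.1 hc.2).choose
  else maxFall B hB i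

lemma sigmaEr_valid (hB : ∀ i, ∃ j, B i j ≠ ⊥) : ValidMaxStrategy A B (sigmaEr A B d hB) := by
  intro j0 h i _ _
  unfold sigmaEr
  split
  · next hc => exact (MWfuel_elim A B d hc.1 hc.2).choose_spec.1
  · exact maxFall_spec B hB i

open Classical in
/-- Min's erasure strategy -/
def tauEr (hA : ∀ j, ∃ i, A i j ≠ ⊥) : MinStrategy m n := fun j0 h =>
  if hc : (reduceSt A B d j0 h).length ≤ n + 1 ∧
      ¬ MWfuel A B d (n + 2 - (reduceSt A B d j0 h).length) (reduceSt A B d j0 h)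
  then (not_MWfuel_elim A B d (f := n + 1 - (reduceSt A B d j0 h).length)
      (by rw [← succFuel hc.1]; exact hc.2)).choose
  else minFall A hA (lastState j0 h)

lemma tauEr_valid (hA : ∀ j, ∃ i, A i j ≠ ⊥) : ValidMinStrategy A B (tauEr A B d hA) := by
  intro j0 h _
  unfold tauEr
  split
  · next hc =>
      rw [← (reduceSt_ne_nil_top A B d j0 h).2]
      exact (not_MWfuel_elim A B d (f := n + 1 - (reduceSt A B d j0 h).length)
        (by rw [← succFuel hc.1]; exact hc.2)).choose_spec.1
  · exact minFall_spec A hA (lastState j0 h)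

lemma suffix_singleton {α : Type*} {s : List α} {a : α} (h : s <:+ [a]) (hne : s ≠ []) :
    s = [a] := by
  rcases List.suffix_cons_iff.mp h with h1 | h1
  · exact h1
  · exact absurd (List.suffix_nil.mp h1) hne
lemma sigmaEr_eval (hB : ∀ i, ∃ j, B i j ≠ ⊥) (j0 : Fin n) (h : List (Fin m × Fin n)) (i : Fin m)
    (hmw : MWfuel A B d (n + 2 - (reduceSt A B d j0 h).length) (reduceSt A B d j0 h))
    (hi : A i (stTop d (reduceSt A B d j0 h)).1 ≠ ⊥) :
    ∃ j', sigmaEr A B d hB j0 h i = j' ∧ B i j' ≠ ⊥ ∧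
      ((∀ e ∈ reduceSt A B d j0 h, e.1 ≠ j') →
        MWfuel A B d ((n + 2 - (reduceSt A B d j0 h).length) - 1)
          ((j', (stTop d (reduceSt A B d j0 h)).2
            + wt A B i (stTop d (reduceSt A B d j0 h)).1 j') :: reduceSt A B d j0 h)) ∧
      (∀ e q, popTo j' (reduceSt A B d j0 h) = e :: q →
        0 ≤ (stTop d (reduceSt A B d j0 h)).2
          + wt A B i (stTop d (reduceSt A B d j0 h)).1 j' - e.2) := by
  refine ⟨(MWfuel_elim A B d hmw hi).choose, ?_, (MWfuel_elim A B d hmw hi).choose_spec.1,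
    (MWfuel_elim A B d hmw hi).choose_spec.2.1, (MWfuel_elim A B d hmw hi).choose_spec.2.2⟩
  unfold sigmaEr
  rw [dif_pos ⟨hmw, hi⟩]

lemma maxEr_invariant (hB : ∀ i, ∃ j, B i j ≠ ⊥) (jbar : Fin n)
    (hMW : MWfuel A B d (n+1) [(jbar, (0:ℝ))])
    {τ : MinStrategy m n} (hτ : ValidMinStrategy A B τ) (p : ℕ) :
    GoodStack A B jbar (reduceSt A B d jbar (playHist (sigmaEr A B d hB) τ jbar p))
      ∧ (∀ s, s <:+ reduceSt A B d jbar (playHist (sigmaEr A B d hB) τ jbar p) → s ≠ [] →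
          MWfuel A B d (n + 2 - s.length) s)
      ∧ (stTop d (reduceSt A B d jbar (playHist (sigmaEr A B d hB) τ jbar p))).2
          ≤ pSum A B (sigmaEr A B d hB) τ jbar p := by
  set σ := sigmaEr A B d hB with hσdef
  have hσ : ValidMaxStrategy A B σ := sigmaEr_valid A B d hB
  induction p with
  | zero =>
      have hred : reduceSt A B d jbar (playHist σ τ jbar 0) = [(jbar, (0:ℝ))] := rfl
      rw [hred]
      refine ⟨⟨by simp, by simp, List.isChain_singleton _, by simp⟩, ?_, by simp [stTop, pSum]⟩
      intro s hs hne
      rw [suffix_singleton hs hne]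
      simpa using hMW
  | succ p ih =>
      obtain ⟨hgood, hsufMW, hsum⟩ := ih
      set st := reduceSt A B d jbar (playHist σ τ jbar p) with hstdef
      have hne : st ≠ [] := hgood.1
      have htop1 : (stTop d st).1 = playJ σ τ jbar p := by
        rw [hstdef, (reduceSt_ne_nil_top A B d jbar _).2, lastState_playHist]
      have hAi : A (playI σ τ jbar p) (stTop d st).1 ≠ ⊥ := by
        rw [htop1]; exact playI_valid A B hσ hτ jbar p
      have hmwst : MWfuel A B d (n + 2 - st.length) st := hsufMW st List.suffix_rfl hne
      obtain ⟨j', hj'eq, hBj', hpush, hpop⟩ :=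
        sigmaEr_eval A B d hB jbar (playHist σ τ jbar p) (playI σ τ jbar p) hmwst hAi
      rw [← hstdef] at hpush hpop
      have hplayJ : playJ σ τ jbar (p+1) = j' := hj'eq
      have hhist : playHist σ τ jbar (p+1) = playHist σ τ jbar p ++ [(playI σ τ jbar p, j')] := by
        show playHist σ τ jbar p ++ [(τ jbar (playHist σ τ jbar p),
          σ jbar (playHist σ τ jbar p) (τ jbar (playHist σ τ jbar p)))] = _
        rw [show σ jbar (playHist σ τ jbar p) (τ jbar (playHist σ τ jbar p)) = j' from hj'eq]
        rfl
      have hred : reduceSt A B d jbar (playHist σ τ jbar (p+1))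
          = stepSt A B d st (playI σ τ jbar p, j') := by
        rw [hhist, reduceSt_concat]
      have hpsum : pSum A B σ τ jbar (p+1)
          = pSum A B σ τ jbar p + wt A B (playI σ τ jbar p) (playJ σ τ jbar p)
              (playJ σ τ jbar (p+1)) := Finset.sum_range_succ _ _
      rcases hp : popTo j' st with - | ⟨e, q⟩
      · -- push
        have hfresh : ∀ e ∈ st, e.1 ≠ j' := popTo_eq_nil_iff.mp hp
        have hstep : stepSt A B d st (playI σ τ jbar p, j')
            = (j', (stTop d st).2 + wt A B (playI σ τ jbar p) (stTop d st).1 j') :: st := by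
          unfold stepSt
          rw [hp]
        rw [hred, hstep]
        obtain ⟨-, hlast, hchain, hnd⟩ := hgood
        refine ⟨⟨by simp, ?_, ?_, ?_⟩, ?_, ?_⟩
        · rcases st with - | ⟨c, t⟩
          · exact absurd rfl hne
          · rw [List.getLast?_cons_cons]; exact hlast
        · apply List.isChain_cons.mpr
          refine ⟨?_, hchain⟩
          intro b hb
          rcases st with - | ⟨c, t⟩
          · exact absurd rfl hne
          · simp only [List.head?_cons, Option.mem_def, Option.some.injEq] at hb
            subst hb
            exact ⟨playI σ τ jbar p, hAi, hBj', rfl⟩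
        · simp only [List.map_cons, List.nodup_cons]
          exact ⟨fun hmem => by
            obtain ⟨e, hemem, he1⟩ := List.mem_map.mp hmem
            exact hfresh e hemem he1, hnd⟩
        · intro s hs hsne
          rcases List.suffix_cons_iff.mp hs with rfl | hs'
          · have harith : n + 2 - (((j', (stTop d st).2
                + wt A B (playI σ τ jbar p) (stTop d st).1 j') :: st).length)
                = (n + 2 - st.length) - 1 := by
              simp only [List.length_cons]
              omega
            rw [harith]
            exact hpush hfresh
          · exact hsufMW s hs' hsne
        · rw [hpsum, hplayJ, ← htop1]
          simp only [stTop, List.headD_cons] at hsum ⊢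
          linarith
      · -- pop
        have hstep : stepSt A B d st (playI σ τ jbar p, j') = e :: q := by
          unfold stepSt
          rw [hp]
        rw [hred, hstep]
        have hsufx : e :: q <:+ st := hp ▸ popTo_suffix j' st
        refine ⟨hgood.suffix A B hsufx (by simp), ?_, ?_⟩
        · intro s hs hsne
          exact hsufMW s (hs.trans hsufx) hsne
        · have hcyc := hpop e q hp
          rw [hpsum, hplayJ, ← htop1]
          simp only [stTop, List.headD_cons] at hsum hcyc ⊢
          linarith

lemma maxEr_bounded (hB : ∀ i, ∃ j, B i j ≠ ⊥) (jbar : Fin n)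
    (hMW : MWfuel A B d (n+1) [(jbar, (0:ℝ))])
    {τ : MinStrategy m n} (hτ : ValidMinStrategy A B τ) (p : ℕ) :
    -(Cw A B * n) ≤ pSum A B (sigmaEr A B d hB) τ jbar p := by
  obtain ⟨hgood, -, hsum⟩ := maxEr_invariant A B d hB jbar hMW hτ p
  have := hgood.top_abs_le A B d
  have h2 := abs_le.mp this
  linarith
/-! ### The finite set of possible cycle values -/

/-- sum of the first `ℓ` weights of a tuple path -/
def pathSum (ℓ : ℕ) (g : Fin (n+1) → Fin m × Fin n × Fin n) : ℝ :=
  ∑ k : Fin (n+1), if (k:ℕ) < ℓ then wt A B (g k).1 (g k).2.1 (g k).2.2 else 0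

/-- the (finite) set of all path sums of length at most `n+1` -/
def PathSums : Finset ℝ :=
  ((Finset.range (n+2)) ×ˢ (Finset.univ : Finset (Fin (n+1) → Fin m × Fin n × Fin n))).image
    (fun q => pathSum A B q.1 q.2)

lemma pathSum_mem {ℓ : ℕ} (hℓ : ℓ < n+2) (g : Fin (n+1) → Fin m × Fin n × Fin n) :
    pathSum A B ℓ g ∈ PathSums A B := by
  unfold PathSums
  exact Finset.mem_image.mpr ⟨(ℓ, g),
    by rw [Finset.mem_product]; exact ⟨Finset.mem_range.mpr hℓ, Finset.mem_univ _⟩, rfl⟩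

lemma pathSum_zero (g : Fin (n+1) → Fin m × Fin n × Fin n) : pathSum A B 0 g = 0 := by
  simp [pathSum]

lemma pathSum_snoc {ℓ : ℕ} (hℓ : ℓ ≤ n) (g : Fin (n+1) → Fin m × Fin n × Fin n)
    (t : Fin m × Fin n × Fin n) :
    pathSum A B (ℓ+1) (Function.update g ⟨ℓ, by omega⟩ t)
      = pathSum A B ℓ g + wt A B t.1 t.2.1 t.2.2 := by
  classical
  unfold pathSum
  have key : ∀ k : Fin (n+1),
      (if (k:ℕ) < ℓ+1 then
        wt A B ((Function.update g ⟨ℓ, by omega⟩ t) k).1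
          ((Function.update g ⟨ℓ, by omega⟩ t) k).2.1
          ((Function.update g ⟨ℓ, by omega⟩ t) k).2.2 else 0)
      = (if (k:ℕ) < ℓ then wt A B (g k).1 (g k).2.1 (g k).2.2 else 0)
        + (if k = ⟨ℓ, by omega⟩ then wt A B t.1 t.2.1 t.2.2 else 0) := by
    intro k
    by_cases hk : k = ⟨ℓ, by omega⟩
    · subst hk
      simp [Function.update_self]
    · have hkℓ : (k:ℕ) ≠ ℓ := fun h => hk (Fin.ext h)
      rw [Function.update_of_ne hk]
      rcases lt_trichotomy (k:ℕ) ℓ with h | h | h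
      · rw [if_pos (by omega), if_pos h, if_neg hk]
        ring
      · exact absurd h hkℓ
      · rw [if_neg (by omega), if_neg (by omega), if_neg hk]
        ring
  rw [Finset.sum_congr rfl (fun k _ => key k), Finset.sum_add_distrib]
  congr 1
  rw [Finset.sum_ite_eq' Finset.univ]
  simp

lemma stack_top_mem (jbar : Fin n) (i0 : Fin m) :
    ∀ st, GoodStack A B jbar st →
      ∃ (ℓ : ℕ) (g : Fin (n+1) → Fin m × Fin n × Fin n),
        ℓ = st.length - 1 ∧ pathSum A B ℓ g = (stTop d st).2 := by
  intro st
  induction st with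
  | nil => intro hg; exact absurd rfl hg.1
  | cons a rest ih =>
      intro hg
      rcases rest with - | ⟨b, t⟩
      · have : a = (jbar, 0) := by
          have := hg.2.1
          simpa using this
        subst this
        exact ⟨0, fun _ => (i0, d, d), by simp, by simp [pathSum_zero, stTop]⟩
      · have hsuf : (b :: t) <:+ (a :: b :: t) := List.suffix_cons a _
        have hg' : GoodStack A B jbar (b :: t) := hg.suffix A B hsuf (by simp)
        obtain ⟨ℓ, g, hℓ, hsum⟩ := ih hg'
        have hlen : (b :: t).length ≤ n := hg'.length_le A B
        have hℓn : ℓ ≤ n := by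
          simp only [List.length_cons] at hℓ hlen
          omega
        obtain ⟨i, hiA, hiB, hevsum⟩ := (List.isChain_cons_cons.mp hg.2.2.1).1
        refine ⟨ℓ+1, Function.update g ⟨ℓ, by omega⟩ (i, b.1, a.1), ?_, ?_⟩
        · simp only [List.length_cons] at hℓ ⊢
          omega
        · rw [pathSum_snoc A B hℓn g (i, b.1, a.1)]
          simp only [stTop, List.headD_cons] at hsum ⊢
          rw [hsum, ← hevsum]

lemma stack_top_mem_PathSums (jbar : Fin n) (i0 : Fin m) {st : List (Fin n × ℝ)}
    (hg : GoodStack A B jbar st) : (stTop d st).2 ∈ PathSums A B := by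
  obtain ⟨ℓ, g, hℓ, hsum⟩ := stack_top_mem A B d jbar i0 st hg
  rw [← hsum]
  apply pathSum_mem
  have := hg.length_le A B
  omega

lemma stack_top_snoc_mem_PathSums (jbar : Fin n) {st : List (Fin n × ℝ)}
    (hg : GoodStack A B jbar st) (i : Fin m) (j' : Fin n) :
    (stTop d st).2 + wt A B i (stTop d st).1 j' ∈ PathSums A B := by
  obtain ⟨ℓ, g, hℓ, hsum⟩ := stack_top_mem A B d jbar i st hg
  have hlen := hg.length_le A B
  have hℓn : ℓ ≤ n := by omega
  rw [← hsum, ← pathSum_snoc A B hℓn g (i, (stTop d st).1, j')]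
  apply pathSum_mem
  omega

/-- set of possible cycle values -/
def DiffSet : Finset ℝ := Finset.image₂ (fun x y => x - y) (PathSums A B) (PathSums A B)

def negD : Finset ℝ := (DiffSet A B).filter (fun r => r < 0)

open Classical in
def delta : ℝ := if h : (negD A B).Nonempty then -((negD A B).max' h) else 1

lemma delta_pos : 0 < delta A B := by
  unfold delta
  split
  · next h =>
      set M := (negD A B).max' h with hM
      have hm : M ∈ negD A B := Finset.max'_mem _ h
      have hlt : M < 0 := by
        have h2 : M ∈ (DiffSet A B).filter (fun r => r < 0) := by simpa [negD] using hm
        simpa using (Finset.mem_filter.mp h2).2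
      linarith
  · norm_num

lemma le_neg_delta {c : ℝ} (hc : c ∈ DiffSet A B) (hneg : c < 0) : c ≤ -(delta A B) := by
  have hmem : c ∈ negD A B := by
    unfold negD
    rw [Finset.mem_filter]
    exact ⟨hc, by simpa using hneg⟩
  have hne : (negD A B).Nonempty := ⟨c, hmem⟩
  unfold delta
  rw [dif_pos hne, neg_neg]
  exact Finset.le_max' _ _ hmem
lemma tauEr_eval (hA : ∀ j, ∃ i, A i j ≠ ⊥) (j0 : Fin n) (h : List (Fin m × Fin n))
    (hlen : (reduceSt A B d j0 h).length ≤ n+1)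
    (hnmw : ¬ MWfuel A B d (n + 2 - (reduceSt A B d j0 h).length) (reduceSt A B d j0 h)) :
    ∃ i, tauEr A B d hA j0 h = i ∧ A i (stTop d (reduceSt A B d j0 h)).1 ≠ ⊥ ∧
      ∀ j', B i j' ≠ ⊥ →
        ((popTo j' (reduceSt A B d j0 h) = [] →
          ¬ MWfuel A B d (n + 1 - (reduceSt A B d j0 h).length)
            ((j', (stTop d (reduceSt A B d j0 h)).2
              + wt A B i (stTop d (reduceSt A B d j0 h)).1 j') :: reduceSt A B d j0 h)) ∧
         (∀ e q, popTo j' (reduceSt A B d j0 h) = e :: q →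
            (stTop d (reduceSt A B d j0 h)).2
              + wt A B i (stTop d (reduceSt A B d j0 h)).1 j' - e.2 < 0)) := by
  have hkey := (not_MWfuel_elim A B d (f := n + 1 - (reduceSt A B d j0 h).length)
      (st := reduceSt A B d j0 h) (by rw [← succFuel hlen]; exact hnmw))
  refine ⟨hkey.choose, ?_, hkey.choose_spec.1, hkey.choose_spec.2⟩
  unfold tauEr
  rw [dif_pos ⟨hlen, hnmw⟩]

lemma minEr_invariant (hA : ∀ j, ∃ i, A i j ≠ ⊥) (jbar : Fin n)
    (hNMW : ¬ MWfuel A B d (n+1) [(jbar, (0:ℝ))])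
    {σ : MaxStrategy m n} (hσ : ValidMaxStrategy A B σ) (p : ℕ) :
    ∃ cnt dsum : ℕ,
      GoodStack A B jbar (reduceSt A B d jbar (playHist σ (tauEr A B d hA) jbar p))
      ∧ (∀ s, s <:+ reduceSt A B d jbar (playHist σ (tauEr A B d hA) jbar p) → s ≠ [] →
          ¬ MWfuel A B d (n + 2 - s.length) s)
      ∧ (reduceSt A B d jbar (playHist σ (tauEr A B d hA) jbar p)).length + dsum + cnt = 1 + p
      ∧ dsum ≤ n * cnt
      ∧ pSum A B σ (tauEr A B d hA) jbar p
          ≤ (stTop d (reduceSt A B d jbar (playHist σ (tauEr A B d hA) jbar p))).2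
            - delta A B * cnt := by
  set τ := tauEr A B d hA with hτdef
  have hτ : ValidMinStrategy A B τ := tauEr_valid A B d hA
  induction p with
  | zero =>
      refine ⟨0, 0, ?_⟩
      have hred : reduceSt A B d jbar (playHist σ τ jbar 0) = [(jbar, (0:ℝ))] := rfl
      rw [hred]
      refine ⟨⟨by simp, by simp, List.isChain_singleton _, by simp⟩, ?_, by simp, by simp,
        by simp [stTop, pSum]⟩
      intro s hs hne
      rw [suffix_singleton hs hne]
      simpa using hNMW
  | succ p ih =>
      obtain ⟨cnt, dsum, hgood, hnsuf, hbal, hdb, hsum⟩ := ih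
      set st := reduceSt A B d jbar (playHist σ τ jbar p) with hstdef
      have hne : st ≠ [] := hgood.1
      have hlenn : st.length ≤ n := hgood.length_le A B
      have htop1 : (stTop d st).1 = playJ σ τ jbar p := by
        rw [hstdef, (reduceSt_ne_nil_top A B d jbar _).2, lastState_playHist]
      have hnmwst : ¬ MWfuel A B d (n + 2 - st.length) st := hnsuf st List.suffix_rfl hne
      obtain ⟨i, hieq, hiA, hall⟩ := tauEr_eval A B d hA jbar (playHist σ τ jbar p)
        (by rw [← hstdef]; omega) (by rw [← hstdef]; exact hnmwst)
      rw [← hstdef] at hiA hall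
      have hiplay : playI σ τ jbar p = i := hieq
      set jj := playJ σ τ jbar (p+1) with hjjdef
      have hBjj : B i jj ≠ ⊥ := by
        rw [← hiplay]
        exact playB_valid A B hσ hτ jbar p
      have hallj := hall jj hBjj
      have hjj2 : jj = σ jbar (playHist σ τ jbar p) i := by
        rw [hjjdef, ← hiplay]; rfl
      have hhist : playHist σ τ jbar (p+1) = playHist σ τ jbar p ++ [(i, jj)] := by
        show playHist σ τ jbar p ++ [(τ jbar (playHist σ τ jbar p),
          σ jbar (playHist σ τ jbar p) (τ jbar (playHist σ τ jbar p)))] = _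
        rw [show τ jbar (playHist σ τ jbar p) = i from hieq, hjj2]
      have hred : reduceSt A B d jbar (playHist σ τ jbar (p+1)) = stepSt A B d st (i, jj) := by
        rw [hhist, reduceSt_concat]
      have hpsum : pSum A B σ τ jbar (p+1)
          = pSum A B σ τ jbar p + wt A B (playI σ τ jbar p) (playJ σ τ jbar p)
              (playJ σ τ jbar (p+1)) := Finset.sum_range_succ _ _
      rw [hiplay, ← htop1, ← hjjdef] at hpsum
      rcases hp : popTo jj st with - | ⟨e, q⟩
      · -- push
        have hfresh : ∀ e ∈ st, e.1 ≠ jj := popTo_eq_nil_iff.mp hp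
        have hstep : stepSt A B d st (i, jj)
            = (jj, (stTop d st).2 + wt A B i (stTop d st).1 jj) :: st := by
          unfold stepSt
          rw [hp]
        rw [hred, hstep]
        refine ⟨cnt, dsum, ⟨by simp, ?_, ?_, ?_⟩, ?_, ?_, ?_, ?_⟩
        · rcases st with - | ⟨c, t⟩
          · exact absurd rfl hne
          · rw [List.getLast?_cons_cons]; exact hgood.2.1
        · apply List.isChain_cons.mpr
          refine ⟨?_, hgood.2.2.1⟩
          intro b hb
          rcases st with - | ⟨c, t⟩
          · exact absurd rfl hne
          · simp only [List.head?_cons, Option.mem_def, Option.some.injEq] at hb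
            subst hb
            exact ⟨i, hiA, hBjj, rfl⟩
        · simp only [List.map_cons, List.nodup_cons]
          exact ⟨fun hmem => by
            obtain ⟨e, hemem, he1⟩ := List.mem_map.mp hmem
            exact hfresh e hemem he1, hgood.2.2.2⟩
        · intro s hs hsne
          rcases List.suffix_cons_iff.mp hs with rfl | hs'
          · have harith : n + 2 - (((jj, (stTop d st).2
                + wt A B i (stTop d st).1 jj) :: st).length)
                = n + 1 - st.length := by
              simp only [List.length_cons]
              omega
            rw [harith]
            exact hallj.1 hp
          · exact hnsuf s hs' hsne
        · simp only [List.length_cons]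
          omega
        · exact hdb
        · rw [hpsum]
          simp only [stTop, List.headD_cons] at hsum ⊢
          linarith
      · -- pop : a negative cycle is erased
        have hstep : stepSt A B d st (i, jj) = e :: q := by
          unfold stepSt
          rw [hp]
        rw [hred, hstep]
        have hsufx : e :: q <:+ st := hp ▸ popTo_suffix jj st
        have hlen' : (e :: q).length ≤ st.length := hsufx.length_le
        have hgood' : GoodStack A B jbar (e :: q) := hgood.suffix A B hsufx (by simp)
        have hcyc := hallj.2 e q hp
        have hmem1 : (stTop d st).2 + wt A B i (stTop d st).1 jj ∈ PathSums A B :=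
          stack_top_snoc_mem_PathSums A B d jbar hgood i jj
        have hmem2 : e.2 ∈ PathSums A B := by
          have := stack_top_mem_PathSums A B d jbar i hgood'
          simpa [stTop] using this
        have hdiff : (stTop d st).2 + wt A B i (stTop d st).1 jj - e.2 ∈ DiffSet A B := by
          unfold DiffSet
          exact Finset.mem_image₂_of_mem hmem1 hmem2
        have hle : (stTop d st).2 + wt A B i (stTop d st).1 jj - e.2 ≤ -(delta A B) :=
          le_neg_delta A B hdiff hcyc
        refine ⟨cnt + 1, dsum + (st.length - (e :: q).length), hgood', ?_, ?_, ?_, ?_⟩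
        · intro s hs hsne
          exact hnsuf s (hs.trans hsufx) hsne
        · omega
        · have : st.length - (e :: q).length ≤ n := by omega
          calc dsum + (st.length - (e :: q).length) ≤ n * cnt + n := by omega
            _ = n * (cnt + 1) := by ring
        · rw [hpsum]
          simp only [stTop, List.headD_cons] at hsum hle ⊢
          push_cast
          linarith

lemma minEr_bounded (hA : ∀ j, ∃ i, A i j ≠ ⊥) (jbar : Fin n)
    (hNMW : ¬ MWfuel A B d (n+1) [(jbar, (0:ℝ))])
    {σ : MaxStrategy m n} (hσ : ValidMaxStrategy A B σ) (p : ℕ) :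
    pSum A B σ (tauEr A B d hA) jbar p
      ≤ (Cw A B * n + delta A B) - (delta A B / (n+1)) * p := by
  obtain ⟨cnt, dsum, hgood, -, hbal, hdb, hsum⟩ := minEr_invariant A B d hA jbar hNMW hσ p
  have htop := abs_le.mp (hgood.top_abs_le A B d)
  have hcnt : (p:ℝ) ≤ n + (n+1) * cnt := by
    have h1 : 1 ≤ (reduceSt A B d jbar (playHist σ (tauEr A B d hA) jbar p)).length := by
      have := hgood.1
      cases hq : (reduceSt A B d jbar (playHist σ (tauEr A B d hA) jbar p)) with
      | nil => exact absurd hq this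
      | cons a l => simp [hq]
    have hlen2 : (reduceSt A B d jbar (playHist σ (tauEr A B d hA) jbar p)).length ≤ n :=
      hgood.length_le A B
    have hbalR : ((reduceSt A B d jbar (playHist σ (tauEr A B d hA) jbar p)).length : ℝ)
        + dsum + cnt = 1 + p := by exact_mod_cast hbal
    have hdbR : (dsum:ℝ) ≤ (n:ℝ) * cnt := by exact_mod_cast hdb
    have h1R : (1:ℝ) ≤ ((reduceSt A B d jbar (playHist σ (tauEr A B d hA) jbar p)).length : ℝ) := by
      exact_mod_cast h1
    have hlen2R : ((reduceSt A B d jbar (playHist σ (tauEr A B d hA) jbar p)).length : ℝ) ≤ n := by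
      exact_mod_cast hlen2
    have hexp : ((n:ℝ)+1) * cnt = (n:ℝ) * cnt + cnt := by ring
    linarith
  have hδ := delta_pos A B
  have hn1 : (0:ℝ) < (n:ℝ) + 1 := by positivity
  have key : delta A B / (n+1) * p ≤ delta A B + delta A B * cnt := by
    rw [div_mul_eq_mul_div, div_le_iff₀ hn1]
    calc delta A B * p ≤ delta A B * (n + (n+1) * cnt) := by nlinarith
      _ ≤ (delta A B + delta A B * cnt) * (n+1) := by ring_nf; nlinarith
  linarith
/-! ### Energy values -/

def Bdd (j : Fin n) (c : ℝ) : Prop :=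
  ∃ σ : MaxStrategy m n, ValidMaxStrategy A B σ ∧
    ∀ τ : MinStrategy m n, ValidMinStrategy A B τ → ∀ p, c ≤ pSum A B σ τ j p

lemma validHist_nil (j0 : Fin n) : ValidHist A B j0 [] := by
  intro k hk
  simp at hk

lemma Bdd_le_zero (hA : ∀ j, ∃ i, A i j ≠ ⊥) {j : Fin n} {c : ℝ} (h : Bdd A B j c) : c ≤ 0 := by
  obtain ⟨σ, hσ, hb⟩ := h
  have := hb (tau0 A hA) (tau0_valid A B hA) 0
  simpa [pSum] using this

lemma lastState_cons (j0 : Fin n) (e : Fin m × Fin n) (h : List (Fin m × Fin n)) :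
    lastState j0 (e :: h) = lastState e.2 h := by
  rcases h with - | ⟨b, t⟩
  · rfl
  · unfold lastState
    rw [List.getLast?_cons_cons]
    rcases hq : (b :: t).getLast? with - | v
    · exact absurd hq (by simp)
    · simp [hq]

lemma validHist_cons_intro {j0 : Fin n} {e : Fin m × Fin n} {h : List (Fin m × Fin n)}
    (hA0 : A e.1 j0 ≠ ⊥) (hB0 : B e.1 e.2 ≠ ⊥) (hv : ValidHist A B e.2 h) :
    ValidHist A B j0 (e :: h) := by
  intro k hk
  cases k with
  | zero => exact ⟨hA0, hB0⟩
  | succ k =>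
      have hk' : k < h.length := by simpa using hk
      have h1 : (e :: h).get ⟨k+1, hk⟩ = h.get ⟨k, hk'⟩ := rfl
      have h2 : (e :: h).take (k+1) = e :: h.take k := rfl
      rw [h1, h2, lastState_cons]
      exact hv k hk'

lemma validHist_cons_elim {j0 : Fin n} {e : Fin m × Fin n} {h : List (Fin m × Fin n)}
    (hv : ValidHist A B j0 (e :: h)) : ValidHist A B e.2 h := by
  intro k hk
  have hk' : k + 1 < (e :: h).length := by simpa using hk
  have h1 : (e :: h).get ⟨k+1, hk'⟩ = h.get ⟨k, hk⟩ := rfl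
  have h2 : (e :: h).take (k+1) = e :: h.take k := rfl
  have := hv (k+1) hk'
  rw [h1, h2, lastState_cons] at this
  exact this

/-- the key Bellman step for energy values -/
lemma Bdd_shift (hA : ∀ j, ∃ i, A i j ≠ ⊥) (hB : ∀ i, ∃ j, B i j ≠ ⊥)
    {j : Fin n} {c : ℝ} (hBdd : Bdd A B j c) {i : Fin m} (hi : A i j ≠ ⊥) :
    ∃ j', B i j' ≠ ⊥ ∧ Bdd A B j' (c - wt A B i j j') := by
  classical
  obtain ⟨σ, hσ, hbound⟩ := hBdd
  set j' := σ j [] i with hj'def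
  have hB' : B i j' ≠ ⊥ := hσ j [] i (validHist_nil A B j) hi
  -- the shifted Max strategy
  set σ' : MaxStrategy m n := fun j0 h ii =>
    if j0 = j' then σ j ((i, j') :: h) ii else maxFall B hB ii with hσ'def
  have hσ' : ValidMaxStrategy A B σ' := by
    intro j0 h ii hvh hii
    show B ii (if j0 = j' then σ j ((i, j') :: h) ii else maxFall B hB ii) ≠ ⊥
    by_cases hj0 : j0 = j'
    · rw [if_pos hj0]
      subst hj0
      have hvh' : ValidHist A B j ((i, j') :: h) := validHist_cons_intro A B hi hB' hvh
      have hii' : A ii (lastState j ((i, j') :: h)) ≠ ⊥ := by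
        rw [lastState_cons]
        exact hii
      exact hσ j ((i, j') :: h) ii hvh' hii'
    · rw [if_neg hj0]
      exact maxFall_spec B hB ii
  refine ⟨j', hB', σ', hσ', ?_⟩
  intro τ' hτ' p
  -- the combined Min strategy
  set τ : MinStrategy m n := fun j0 h =>
    match h with
    | [] => if j0 = j then i else minFall A hA j0
    | e :: t => if j0 = j ∧ e = (i, j') then τ' j' t else minFall A hA (lastState j0 (e :: t))
    with hτdef
  have hτ : ValidMinStrategy A B τ := by
    intro j0 h hvh
    rcases h with - | ⟨e, t⟩
    · show A (if j0 = j then i else minFall A hA j0) (lastState j0 []) ≠ ⊥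
      by_cases hj0 : j0 = j
      · subst hj0; rw [if_pos rfl]; exact hi
      · rw [if_neg hj0]; exact minFall_spec A hA j0
    · show A (if j0 = j ∧ e = (i, j') then τ' j' t else minFall A hA (lastState j0 (e :: t)))
        (lastState j0 (e :: t)) ≠ ⊥
      by_cases hc : j0 = j ∧ e = (i, j')
      · rw [if_pos hc]
        obtain ⟨rfl, rfl⟩ := hc
        rw [lastState_cons]
        exact hτ' j' t (validHist_cons_elim A B hvh)
      · rw [if_neg hc]
        exact minFall_spec A hA _
  -- play correspondence
  have hτnil : τ j [] = i := by
    show (if j = j then i else minFall A hA j) = i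
    rw [if_pos rfl]
  have hcorr : ∀ q, playHist σ τ j (q+1) = (i, j') :: playHist σ' τ' j' q := by
    intro q
    induction q with
    | zero =>
        show [] ++ [(τ j [], σ j [] (τ j []))] = [(i, j')]
        rw [hτnil, ← hj'def]
        rfl
    | succ q ihq =>
        show playHist σ τ j (q+1) ++ [(τ j (playHist σ τ j (q+1)),
            σ j (playHist σ τ j (q+1)) (τ j (playHist σ τ j (q+1))))] = _
        rw [ihq]
        have hstep1 : τ j ((i, j') :: playHist σ' τ' j' q) = τ' j' (playHist σ' τ' j' q) := by
          show (if j = j ∧ ((i, j') : Fin m × Fin n) = (i, j')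
            then τ' j' (playHist σ' τ' j' q)
            else minFall A hA (lastState j ((i, j') :: playHist σ' τ' j' q)))
            = τ' j' (playHist σ' τ' j' q)
          rw [if_pos ⟨rfl, rfl⟩]
        rw [hstep1]
        have hstep2 : σ j ((i, j') :: playHist σ' τ' j' q) (τ' j' (playHist σ' τ' j' q))
            = σ' j' (playHist σ' τ' j' q) (τ' j' (playHist σ' τ' j' q)) := by
          symm
          show (if j' = j' then σ j ((i, j') :: playHist σ' τ' j' q) (τ' j' (playHist σ' τ' j' q))
            else maxFall B hB (τ' j' (playHist σ' τ' j' q))) = _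
          rw [if_pos rfl]
        rw [hstep2]
        rfl
  have hI : ∀ k, playI σ τ j (k+1) = playI σ' τ' j' k := by
    intro k
    show τ j (playHist σ τ j (k+1)) = τ' j' (playHist σ' τ' j' k)
    rw [hcorr k]
    show (if j = j ∧ ((i, j') : Fin m × Fin n) = (i, j')
      then τ' j' (playHist σ' τ' j' k)
      else minFall A hA (lastState j ((i, j') :: playHist σ' τ' j' k)))
      = τ' j' (playHist σ' τ' j' k)
    rw [if_pos ⟨rfl, rfl⟩]
  have hJ : ∀ k, playJ σ τ j (k+1) = playJ σ' τ' j' k := by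
    intro k
    cases k with
    | zero =>
        show σ j (playHist σ τ j 0) (playI σ τ j 0) = j'
        show σ j [] (τ j []) = j'
        rw [hτnil, ← hj'def]
    | succ k =>
        show σ j (playHist σ τ j (k+1)) (playI σ τ j (k+1)) = playJ σ' τ' j' (k+1)
        rw [hcorr k, hI k]
        show σ j ((i, j') :: playHist σ' τ' j' k) (playI σ' τ' j' k) = _
        have : σ j ((i, j') :: playHist σ' τ' j' k) (playI σ' τ' j' k)
            = σ' j' (playHist σ' τ' j' k) (playI σ' τ' j' k) := by
          symm
          show (if j' = j' then σ j ((i, j') :: playHist σ' τ' j' k) (playI σ' τ' j' k)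
            else maxFall B hB (playI σ' τ' j' k)) = _
          rw [if_pos rfl]
        rw [this]
        rfl
  have hsum : pSum A B σ τ j (p+1) = wt A B i j j' + pSum A B σ' τ' j' p := by
    unfold pSum
    rw [Finset.sum_range_succ']
    have h0 : playI σ τ j 0 = i := hτnil
    have h1 : playJ σ τ j 0 = j := rfl
    have h2 : playJ σ τ j 1 = j' := hJ 0
    rw [h0, h1, h2, add_comm]
    congr 1
    apply Finset.sum_congr rfl
    intro k _
    rw [hI k, hJ k, hJ (k+1)]
  have := hbound τ hτ (p+1)
  rw [hsum] at this
  linarith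
lemma pSum_abs_le (σ : MaxStrategy m n) (τ : MinStrategy m n) (j0 : Fin n) (p : ℕ) :
    |pSum A B σ τ j0 p| ≤ Cw A B * p := by
  calc |pSum A B σ τ j0 p| ≤ ∑ k ∈ Finset.range p,
        |wt A B (playI σ τ j0 k) (playJ σ τ j0 k) (playJ σ τ j0 (k+1))| :=
      Finset.abs_sum_le_sum_abs _ _
    _ ≤ (Finset.range p).card • Cw A B :=
      Finset.sum_le_card_nsmul _ _ _ (fun k _ => abs_wt_le A B _ _ _)
    _ = Cw A B * p := by
      simp [nsmul_eq_mul]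
      ring

/-- From a bounded-energy strategy, extract a feasible tropical vector. -/
lemma exists_feasible_of_Bdd (hA : ∀ j, ∃ i, A i j ≠ ⊥) (hB : ∀ i, ∃ j, B i j ≠ ⊥)
    (jbar : Fin n) {c0 : ℝ} (h0 : Bdd A B jbar c0) :
    ∃ x : Fin n → WithBot ℝ, 0 ≤ x jbar ∧
      ∀ i, (Finset.univ.sup fun j => A i j + x j) ≤ Finset.univ.sup fun j => B i j + x j := by
  classical
  set W : Fin n → Prop := fun j => ∃ c, Bdd A B j c with hWdef
  set v : Fin n → ℝ := fun j => sSup {c | Bdd A B j c} with hvdef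
  set x : Fin n → WithBot ℝ :=
    fun j => if W j then ((v j - v jbar : ℝ) : WithBot ℝ) else ⊥ with hxdef
  have hbdda : ∀ j, BddAbove {c | Bdd A B j c} :=
    fun j => ⟨0, fun c hc => Bdd_le_zero A B hA hc⟩
  have hWbar : W jbar := ⟨c0, h0⟩
  have hxbar : x jbar = ((v jbar - v jbar : ℝ) : WithBot ℝ) := if_pos hWbar
  refine ⟨x, ?_, ?_⟩
  · rw [hxbar]
    simp
  · intro i
    apply Finset.sup_le
    intro j _
    by_cases hWj : W j
    · by_cases hAij : A i j = ⊥
      · rw [hAij]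
        simp
      · -- main case
        obtain ⟨cex, hcex⟩ := hWj
        obtain ⟨a, ha⟩ := wb_exists_coe hAij
        have haa : (A i j).unbotD 0 = a := by rw [ha]; rfl
        obtain ⟨j'0, hB0, hBdd0⟩ := Bdd_shift A B hA hB hcex hAij
        have hW0 : W j'0 := ⟨_, hBdd0⟩
        have hx0 : x j'0 = ((v j'0 - v jbar : ℝ) : WithBot ℝ) := if_pos hW0
        obtain ⟨b0, hb0⟩ := wb_exists_coe hB0
        have hR0 : B i j'0 + x j'0 ≤ Finset.univ.sup fun j' => B i j' + x j' :=
          Finset.le_sup (f := fun j' => B i j' + x j') (Finset.mem_univ j'0)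
        have hRne : (Finset.univ.sup fun j' => B i j' + x j') ≠ ⊥ := by
          intro hbot
          rw [hbot, le_bot_iff] at hR0
          rw [hb0, hx0] at hR0
          exact absurd hR0 (by simp [← WithBot.coe_add])
        obtain ⟨r, hr⟩ := wb_exists_coe hRne
        have key : ∀ c ∈ {c | Bdd A B j c}, c ≤ r - a + v jbar := by
          intro c hc
          obtain ⟨j', hB', hBdd'⟩ := Bdd_shift A B hA hB hc hAij
          have hWj' : W j' := ⟨_, hBdd'⟩
          obtain ⟨b, hb⟩ := wb_exists_coe hB'
          have hbb : (B i j').unbotD 0 = b := by rw [hb]; rfl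
          have h1 : c - wt A B i j j' ≤ v j' := le_csSup (hbdda j') hBdd'
          have h2 : B i j' + x j' ≤ Finset.univ.sup fun j'' => B i j'' + x j'' :=
            Finset.le_sup (f := fun j'' => B i j'' + x j'') (Finset.mem_univ j')
          have hx' : x j' = ((v j' - v jbar : ℝ) : WithBot ℝ) := if_pos hWj'
          rw [hb, hx', hr, ← WithBot.coe_add, WithBot.coe_le_coe] at h2
          unfold wt at h1
          rw [hbb, haa] at h1
          linarith
        have hfin : v j ≤ r - a + v jbar := csSup_le ⟨cex, hcex⟩ key
        have hxj : x j = ((v j - v jbar : ℝ) : WithBot ℝ) := if_pos ⟨cex, hcex⟩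
        rw [ha, hxj, hr, ← WithBot.coe_add, WithBot.coe_le_coe]
        linarith
    · have hxj : x j = ⊥ := if_neg hWj
      rw [hxj]
      simp
end MPG
namespace MPG2
open Filter

lemma liminf_avg_nonneg {S : ℕ → ℝ} {K : ℝ} (hS : ∀ p, -K ≤ S p) (hup : ∀ p, S p ≤ K * p) :
    0 ≤ Filter.liminf (fun p : ℕ => (1/(p:ℝ)) * S p) Filter.atTop := by
  have hg : Tendsto (fun p : ℕ => -K / (p:ℝ)) atTop (nhds 0) :=
    tendsto_const_div_atTop_nhds_zero_nat (-K)
  have h0 : Filter.liminf (fun p : ℕ => -K / (p:ℝ)) Filter.atTop = 0 := hg.liminf_eq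
  rw [← h0]
  apply Filter.liminf_le_liminf
  · filter_upwards [Filter.eventually_ge_atTop 1] with p hp
    have hp' : (0:ℝ) < (p:ℝ) := by exact_mod_cast hp
    rw [div_eq_mul_inv, mul_comm, ← one_div]
    have := mul_le_mul_of_nonneg_left (hS p) (le_of_lt (one_div_pos.mpr hp'))
    linarith
  · exact hg.isBoundedUnder_ge
  · apply Filter.IsBoundedUnder.isCoboundedUnder_ge
    apply Filter.isBoundedUnder_of
    refine ⟨max K 0, fun p => ?_⟩
    rcases Nat.eq_zero_or_pos p with h | h
    · subst h; simp [le_max_right K 0]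
    · have hp' : (0:ℝ) < (p:ℝ) := by exact_mod_cast h
      have hp1 : (1:ℝ) ≤ (p:ℝ) := by exact_mod_cast h
      rw [one_div, mul_comm, ← div_eq_mul_inv, div_le_iff₀ hp']
      have := hup p
      nlinarith [le_max_left K 0, le_max_right K 0]

lemma liminf_avg_neg {S : ℕ → ℝ} {K a δ : ℝ} (hδ : 0 < δ)
    (hS : ∀ p : ℕ, -(K * p) ≤ S p) (hup : ∀ p : ℕ, S p ≤ a - δ * p) :
    Filter.liminf (fun p : ℕ => (1/(p:ℝ)) * S p) Filter.atTop < 0 := by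
  have key : Filter.liminf (fun p : ℕ => (1/(p:ℝ)) * S p) Filter.atTop ≤ -(δ/2) := by
    apply Filter.liminf_le_of_frequently_le
    · apply Filter.Eventually.frequently
      have hev : ∀ᶠ p : ℕ in atTop, (2 * max a 0 / δ ≤ (p:ℝ) ∧ 1 ≤ p) := by
        filter_upwards [Filter.eventually_ge_atTop (Nat.ceil (2 * max a 0 / δ)),
          Filter.eventually_ge_atTop 1] with p h1 h2
        exact ⟨le_trans (Nat.le_ceil _) (by exact_mod_cast h1), h2⟩
      filter_upwards [hev] with p hp
      obtain ⟨h1, h2⟩ := hp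
      have hp' : (0:ℝ) < (p:ℝ) := by exact_mod_cast h2
      rw [one_div, mul_comm, ← div_eq_mul_inv, div_le_iff₀ hp']
      rw [div_le_iff₀ hδ] at h1
      have h3 : a ≤ δ * p / 2 := by
        nlinarith [le_max_left a 0, le_max_right a 0]
      have := hup p
      nlinarith
    · apply Filter.isBoundedUnder_of
      refine ⟨-(max K 0), fun p => ?_⟩
      rcases Nat.eq_zero_or_pos p with h | h
      · subst h; simp [le_max_right K 0]
      · have hp' : (0:ℝ) < (p:ℝ) := by exact_mod_cast h
        rw [ge_iff_le, one_div, mul_comm, ← div_eq_mul_inv, le_div_iff₀ hp']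
        have h1 : -(K * p) ≤ S p := hS p
        nlinarith [le_max_left K 0, le_max_right K 0]
  linarith
end MPG2

/-- Player Max can guarantee a nonnegative mean payoff from the initial
state `j̄` if, and only if, there is a solution `x` of the system of tropical linear
inequalities `x j̄ ≥ 0`, `A ⊙ x ≤ B ⊙ x`. -/
theorem maxWinning_iff_tropically_feasible
    (A B : Matrix (Fin m) (Fin n) (WithBot ℝ))
    (hA : ∀ j, ∃ i, A i j ≠ ⊥) (hB : ∀ i, ∃ j, B i j ≠ ⊥) (jbar : Fin n) :
    (∃ σ : MaxStrategy m n, ValidMaxStrategy A B σ ∧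
        ∀ τ : MinStrategy m n, ValidMinStrategy A B τ →
          0 ≤ meanPayoff A B σ τ jbar) ↔
      (∃ x : Fin n → WithBot ℝ, 0 ≤ x jbar ∧
        ∀ i, (univ.sup fun j => A i j + x j) ≤ univ.sup fun j => B i j + x j) := by
  classical
  constructor
  · rintro ⟨σ1, hσ1, hwin⟩
    by_cases hMW : MPG.MWfuel A B jbar (n+1) [(jbar, (0:ℝ))]
    · exact MPG.exists_feasible_of_Bdd A B hA hB jbar
        ⟨MPG.sigmaEr A B jbar hB, MPG.sigmaEr_valid A B jbar hB,
          fun τ hτ p => MPG.maxEr_bounded A B jbar hB jbar hMW hτ p⟩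
    · exfalso
      have hτv := MPG.tauEr_valid A B jbar hA
      have hwin' := hwin (MPG.tauEr A B jbar hA) hτv
      have hub := fun p => MPG.minEr_bounded A B jbar hA jbar hMW hσ1 p
      have hlb : ∀ p : ℕ, -(MPG.Cw A B * p) ≤ MPG.pSum A B σ1 (MPG.tauEr A B jbar hA) jbar p :=
        fun p => by
          have := (abs_le.mp (MPG.pSum_abs_le A B σ1 (MPG.tauEr A B jbar hA) jbar p)).1
          linarith
      have hδ : 0 < MPG.delta A B / ((n:ℝ)+1) := div_pos (MPG.delta_pos A B) (by positivity)
      have hneg := MPG2.liminf_avg_neg hδ hlb hub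
      rw [MPG.meanPayoff_eq] at hwin'
      linarith
  · rintro ⟨x, hx0, hfeas⟩
    have hxne : x jbar ≠ ⊥ := by
      intro h
      rw [h] at hx0
      exact absurd hx0 (by simp)
    refine ⟨MPG.sigmaX A B hB x hfeas, MPG.sigmaX_valid A B hB x hfeas, ?_⟩
    intro τ hτ
    rw [MPG.meanPayoff_eq]
    have hMx0 : (0:ℝ) ≤ ∑ j, |(x j).unbotD 0| :=
      Finset.sum_nonneg (fun _ _ => abs_nonneg _)
    have hxval : 0 ≤ (x jbar).unbotD 0 := by
      obtain ⟨u, hu⟩ := MPG.wb_exists_coe hxne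
      rw [hu] at hx0 ⊢
      simp only [WithBot.unbotD_coe]
      exact_mod_cast hx0
    apply MPG2.liminf_avg_nonneg (K := (∑ j, |(x j).unbotD 0|) + MPG.Cw A B)
    · intro p
      have h1 := MPG.feasible_bounded A B hB x hfeas jbar hxne hτ p
      have h2 := MPG.Cw_pos A B
      linarith
    · intro p
      have h3 := (abs_le.mp (MPG.pSum_abs_le A B (MPG.sigmaX A B hB x hfeas) τ jbar p)).2
      have hp0 : (0:ℝ) ≤ (p:ℝ) := Nat.cast_nonneg p
      nlinarith

end
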